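/- arXiv:math/0305331 — 2 statements merged into one kernel-verified Lean document; each statement's English description precedes it below -/
import Mathlib

section
/- Let m ≥ 1, and let h, k ≥ 0 with 1 ≤ h + k ≤ m, and 0 ≤ ℓ ≤ m - h - k. Then the sum over all pairs (p, q) of finitely supported natural number sequences with Σ p_s = h, Σ q_s = k, and Σ s(p_s + q_s) = m - ℓ, of the coefficients m!/(ℓ! · Π_s (s!)^{p_s} p_s! (s!)^{q_s} q_s!), equals C(h+k, h) · C(m, ℓ) · S(m-ℓ, h+k), where S is the Stirling number of the second kind and C the binomial coefficient. -/
/-- Stirling numbers of the second kind. -/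
def stirling : ℕ → ℕ → ℕ
  | 0, 0 => 1
  | 0, _ + 1 => 0
  | _ + 1, 0 => 0
  | n + 1, j + 1 => (j + 1) * stirling n (j + 1) + stirling n j

namespace Stmt4Aux
open Finset Finsupp

def wt (p : ℕ →₀ ℕ) : ℕ := p.prod fun s n => Nat.factorial s ^ n * Nat.factorial n
def deg (p : ℕ →₀ ℕ) : ℕ := p.sum fun _ n => n
def wdeg (p : ℕ →₀ ℕ) : ℕ := p.sum fun s n => s * n

lemma wt_pos (p : ℕ →₀ ℕ) : 0 < wt p :=
  Finset.prod_pos fun s _ => Nat.mul_pos (pow_pos (Nat.factorial_pos s) _) (Nat.factorial_pos _)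

lemma wt_add_single (p : ℕ →₀ ℕ) (s : ℕ) :
    wt (p + Finsupp.single s 1) = wt p * (Nat.factorial s * (p s + 1)) := by
  classical
  set q : ℕ →₀ ℕ := p + Finsupp.single s 1 with hqdef
  set S := insert s p.support with hS
  have h1 : ∀ i ∈ S, Nat.factorial i ^ (0:ℕ) * Nat.factorial 0 = 1 := by simp [Nat.factorial]
  have hp : p.support ⊆ S := subset_insert _ _
  have hq : q.support ⊆ S := by
    refine Finsupp.support_add.trans ?_
    intro a ha
    rcases Finset.mem_union.1 ha with h' | h'
    · exact hp h'
    · have := Finsupp.support_single_subset h'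
      simp only [Finset.mem_singleton] at this
      simp [hS, this]
  have e1 : wt q
      = ∏ i ∈ S, Nat.factorial i ^ (q i)
          * Nat.factorial (q i) :=
    Finsupp.prod_of_support_subset _ hq _ (fun i _ => by simp)
  have e2 : wt p = ∏ i ∈ S, Nat.factorial i ^ (p i) * Nat.factorial (p i) :=
    Finsupp.prod_of_support_subset _ hp _ (fun i _ => by simp)
  rw [e1, e2, ← Finset.mul_prod_erase S _ (mem_insert_self s _),
    ← Finset.mul_prod_erase S (fun i => Nat.factorial i ^ (p i) * Nat.factorial (p i))
      (mem_insert_self s _)]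
  have hcong : ∀ i ∈ S.erase s,
      Nat.factorial i ^ (q i) * Nat.factorial (q i)
        = Nat.factorial i ^ (p i) * Nat.factorial (p i) := by
    intro i hi
    have : i ≠ s := (Finset.mem_erase.1 hi).1
    simp [hqdef, Finsupp.single_apply, (Ne.symm this)]
  rw [Finset.prod_congr rfl hcong]
  have : q s = p s + 1 := by simp [hqdef]
  rw [this, pow_succ, Nat.factorial_succ]
  ring

lemma deg_add_single (p : ℕ →₀ ℕ) (s : ℕ) : deg (p + Finsupp.single s 1) = deg p + 1 := by
  rw [deg, deg, Finsupp.sum_add_index' (fun _ => rfl) (fun _ _ _ => rfl),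
    Finsupp.sum_single_index rfl]

lemma wdeg_add_single (p : ℕ →₀ ℕ) (s : ℕ) : wdeg (p + Finsupp.single s 1) = wdeg p + s := by
  rw [wdeg, wdeg, Finsupp.sum_add_index' (fun a => by simp) (fun a b c => by ring),
    Finsupp.sum_single_index (by simp)]
  simp

lemma decomp {p : ℕ →₀ ℕ} {s : ℕ} (h : p s ≠ 0) :
    p = (p - Finsupp.single s 1) + Finsupp.single s 1 := by
  ext a
  rcases eq_or_ne a s with rfl | hne
  · simp [Finsupp.tsub_apply, Finsupp.single_apply]; omega
  · simp [Finsupp.tsub_apply, Finsupp.single_apply, Ne.symm hne]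

lemma add_sub_single (p : ℕ →₀ ℕ) (s : ℕ) :
    (p + Finsupp.single s 1) - Finsupp.single s 1 = p := by
  ext a
  rcases eq_or_ne a s with rfl | hne
  · simp [Finsupp.tsub_apply, Finsupp.single_apply]
  · simp [Finsupp.tsub_apply, Finsupp.single_apply, Ne.symm hne]

lemma mul_le_wdeg (p : ℕ →₀ ℕ) (s : ℕ) : s * p s ≤ wdeg p := by
  by_cases hs : s ∈ p.support
  · exact Finset.single_le_sum (f := fun t => t * p t) (fun _ _ => Nat.zero_le _) hs
  · simp [Finsupp.notMem_support_iff.1 hs]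

lemma deg_eq_sum (p : ℕ →₀ ℕ) : deg p = ∑ s ∈ p.support, p s := rfl
lemma wdeg_eq_sum (p : ℕ →₀ ℕ) : wdeg p = ∑ s ∈ p.support, s * p s := rfl

lemma eq_zero_of_wdeg {p : ℕ →₀ ℕ} (h0 : p 0 = 0) (h : wdeg p = 0) : p = 0 := by
  ext s
  rcases Nat.eq_zero_or_pos s with rfl | hs
  · simpa using h0
  · have := mul_le_wdeg p s
    rw [h] at this
    simpa [Nat.le_zero, hs.ne'] using this

noncomputable def PF (n h k : ℕ) : Finset ((ℕ →₀ ℕ) × (ℕ →₀ ℕ)) := by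
  classical
  exact (((range (n+1)).finsupp fun _ => range (n+1)) ×ˢ
      ((range (n+1)).finsupp fun _ => range (n+1))).filter
    fun pq => pq.1 0 = 0 ∧ pq.2 0 = 0 ∧ deg pq.1 = h ∧ deg pq.2 = k ∧
      wdeg pq.1 + wdeg pq.2 = n

lemma aux_mem_finsupp {n : ℕ} {p : ℕ →₀ ℕ} (h0 : p 0 = 0) (hw : wdeg p ≤ n) :
    p ∈ (range (n+1)).finsupp fun _ => range (n+1) := by
  rw [Finset.mem_finsupp_iff]
  constructor
  · intro s hs
    have hps : p s ≠ 0 := Finsupp.mem_support_iff.1 hs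
    have hs0 : s ≠ 0 := by rintro rfl; exact hps h0
    have := mul_le_wdeg p s
    have : s ≤ n := by
      have h1 : 1 ≤ p s := Nat.one_le_iff_ne_zero.2 hps
      nlinarith
    exact Finset.mem_range.2 (by omega)
  · intro i _
    rcases Nat.eq_zero_or_pos i with rfl | hi
    · simp [h0]
    · have := mul_le_wdeg p i
      have : p i ≤ n := by nlinarith
      exact Finset.mem_range.2 (by omega)

lemma mem_PF {n h k : ℕ} {pq : (ℕ →₀ ℕ) × (ℕ →₀ ℕ)} :
    pq ∈ PF n h k ↔ pq.1 0 = 0 ∧ pq.2 0 = 0 ∧ deg pq.1 = h ∧ deg pq.2 = k ∧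
      wdeg pq.1 + wdeg pq.2 = n := by
  classical
  rw [PF]
  constructor
  · intro hmem
    exact (Finset.mem_filter.1 hmem).2
  · intro hc
    refine Finset.mem_filter.2 ⟨Finset.mem_product.2 ⟨?_, ?_⟩, hc⟩
    · exact aux_mem_finsupp hc.1 (by omega)
    · exact aux_mem_finsupp hc.2.1 (by omega)

noncomputable def P (n h k : ℕ) : ℝ :=
  ∑ pq ∈ PF n h k, (Nat.factorial n : ℝ) / (wt pq.1 * wt pq.2)

lemma P_zero (h k : ℕ) : P 0 h k = if h = 0 ∧ k = 0 then 1 else 0 := by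
  have hPF : PF 0 h k = if h = 0 ∧ k = 0 then {((0 : ℕ →₀ ℕ), (0 : ℕ →₀ ℕ))} else ∅ := by
    ext pq
    rw [mem_PF]
    split
    · next hc =>
      obtain ⟨rfl, rfl⟩ := hc
      simp only [Finset.mem_singleton]
      constructor
      · rintro ⟨h1, h2, h3, h4, h5⟩
        have hp : pq.1 = 0 := eq_zero_of_wdeg h1 (by omega)
        have hq : pq.2 = 0 := eq_zero_of_wdeg h2 (by omega)
        rw [Prod.ext_iff]; exact ⟨hp, hq⟩
      · rintro h'
        rw [Prod.ext_iff] at h'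
        obtain ⟨h1, h2⟩ := h'
        simp [h1, h2, deg, wdeg]
    · next hc =>
      simp only [Finset.notMem_empty, iff_false]
      rintro ⟨h1, h2, h3, h4, h5⟩
      have hp : pq.1 = 0 := eq_zero_of_wdeg h1 (by omega)
      have hq : pq.2 = 0 := eq_zero_of_wdeg h2 (by omega)
      rw [hp] at h3; rw [hq] at h4
      simp [deg] at h3 h4
      omega
  rw [P, hPF]
  split
  · simp [wt]
  · simp

lemma sum_PF_swap (n h k : ℕ) (f : (ℕ →₀ ℕ) × (ℕ →₀ ℕ) → ℝ) :
    ∑ pq ∈ PF n h k, f pq = ∑ pq ∈ PF n k h, f pq.swap := by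
  refine Finset.sum_nbij' Prod.swap Prod.swap ?_ ?_ ?_ ?_ ?_ <;>
    intro pq hpq <;> simp_all [mem_PF, Prod.swap] <;> omega

lemma val_le_deg (p : ℕ →₀ ℕ) (s : ℕ) : p s ≤ deg p := by
  by_cases hs : s ∈ p.support
  · exact Finset.single_le_sum (f := fun t => p t) (fun _ _ => Nat.zero_le _) hs
  · simp [Finsupp.notMem_support_iff.1 hs]

noncomputable def c (n : ℕ) (pq : (ℕ →₀ ℕ) × (ℕ →₀ ℕ)) : ℝ :=
  (Nat.factorial n : ℝ) / (wt pq.1 * wt pq.2)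

lemma P_def (n h k : ℕ) : P n h k = ∑ pq ∈ PF n h k, c n pq := rfl

noncomputable def prev (j : ℕ) (f : ℕ → ℝ) : ℝ := match j with | 0 => 0 | j' + 1 => f j'

lemma A1a (n h k : ℕ) :
    ∑ pq ∈ (PF (n+1) h k).filter (fun pq => pq.1 1 ≠ 0),
      (pq.1 1 : ℝ) * c n pq = prev h (fun h' => P n h' k) := by
  classical
  match h with
  | 0 =>
    rw [prev]
    refine Finset.sum_eq_zero fun pq hpq => ?_
    obtain ⟨hmem, hne⟩ := Finset.mem_filter.1 hpq
    obtain ⟨hp0, hq0, hdp, hdq, hw⟩ := mem_PF.1 hmem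
    have := val_le_deg pq.1 1
    rw [hdp] at this
    omega
  | h' + 1 =>
    rw [prev, P_def]
    refine Finset.sum_nbij' (fun pq => (pq.1 - Finsupp.single 1 1, pq.2))
      (fun pq => (pq.1 + Finsupp.single 1 1, pq.2)) ?_ ?_ ?_ ?_ ?_
    · rintro ⟨p, q⟩ hpq
      obtain ⟨hmem, hne⟩ := Finset.mem_filter.1 hpq
      obtain ⟨hp0, hq0, hdp, hdq, hw⟩ := mem_PF.1 hmem
      dsimp only at hp0 hq0 hdp hdq hw hne ⊢
      obtain ⟨r, rfl⟩ : ∃ r : ℕ →₀ ℕ, p = r + Finsupp.single 1 1 := ⟨_, decomp hne⟩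
      rw [add_sub_single]
      rw [deg_add_single] at hdp
      rw [wdeg_add_single] at hw
      refine mem_PF.2 ⟨?_, hq0, ?_, hdq, ?_⟩
      · simpa [Finsupp.single_apply] using hp0
      · dsimp only; omega
      · dsimp only; omega
    · rintro ⟨p, q⟩ hpq
      obtain ⟨hp0, hq0, hdp, hdq, hw⟩ := mem_PF.1 hpq
      dsimp only at hp0 hq0 hdp hdq hw ⊢
      refine Finset.mem_filter.2 ⟨mem_PF.2 ⟨?_, hq0, ?_, hdq, ?_⟩, ?_⟩
      · simp [Finsupp.single_apply, hp0]
      · dsimp only; rw [deg_add_single, hdp]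
      · dsimp only; rw [wdeg_add_single]; omega
      · simp
    · rintro ⟨p, q⟩ hpq
      obtain ⟨hmem, hne⟩ := Finset.mem_filter.1 hpq
      dsimp only at hne ⊢
      simp only [Prod.mk.injEq]
      exact ⟨(decomp hne).symm, trivial⟩
    · rintro ⟨p, q⟩ hpq
      dsimp only
      simp only [Prod.mk.injEq]
      exact ⟨add_sub_single p 1, trivial⟩
    · rintro ⟨p, q⟩ hpq
      obtain ⟨hmem, hne⟩ := Finset.mem_filter.1 hpq
      dsimp only at hne ⊢
      obtain ⟨r, rfl⟩ : ∃ r : ℕ →₀ ℕ, p = r + Finsupp.single 1 1 := ⟨_, decomp hne⟩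
      rw [add_sub_single]
      have hval : ((r + Finsupp.single 1 1 : ℕ →₀ ℕ)) 1 = r 1 + 1 := by simp
      have hwt : wt (r + Finsupp.single 1 1) = wt r * (r 1 + 1) := by
        rw [wt_add_single]; simp [Nat.factorial]
      have h1 : (wt r : ℝ) ≠ 0 := Nat.cast_ne_zero.2 (wt_pos r).ne'
      have h2 : (wt q : ℝ) ≠ 0 := Nat.cast_ne_zero.2 (wt_pos q).ne'
      simp only [c, hval, hwt]
      push_cast
      field_simp

lemma A1b (n h k : ℕ) :
    ∑ pq ∈ PF (n+1) h k, ∑ s ∈ pq.1.support.filter (fun s => 2 ≤ s),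
      (s : ℝ) * (pq.1 s : ℝ) * c n pq = h * P n h k := by
  classical
  have hrhs : (h : ℝ) * P n h k
      = ∑ pq ∈ PF n h k, ∑ t ∈ pq.1.support, (pq.1 t : ℝ) * c n pq := by
    rw [P_def, Finset.mul_sum]
    refine Finset.sum_congr rfl fun pq hpq => ?_
    obtain ⟨hp0, hq0, hdp, hdq, hw⟩ := mem_PF.1 hpq
    rw [← Finset.sum_mul]
    congr 1
    have : ((deg pq.1 : ℕ) : ℝ) = ∑ t ∈ pq.1.support, (pq.1 t : ℝ) := by
      rw [deg_eq_sum]; push_cast; rfl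
    rw [← this, hdp]
  rw [hrhs, Finset.sum_sigma' (PF (n+1) h k)
      (fun pq => pq.1.support.filter (fun s => 2 ≤ s))
      (fun pq s => (s : ℝ) * (pq.1 s : ℝ) * c n pq),
    Finset.sum_sigma' (PF n h k) (fun pq => pq.1.support)
      (fun pq t => (pq.1 t : ℝ) * c n pq)]
  refine Finset.sum_nbij'
    (fun x => ⟨(x.1.1 - Finsupp.single x.2 1 + Finsupp.single (x.2 - 1) 1, x.1.2), x.2 - 1⟩)
    (fun y => ⟨(y.1.1 - Finsupp.single y.2 1 + Finsupp.single (y.2 + 1) 1, y.1.2), y.2 + 1⟩)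
    ?_ ?_ ?_ ?_ ?_
  · rintro ⟨⟨p, q⟩, s⟩ hx
    obtain ⟨hmem, hsf⟩ := Finset.mem_sigma.1 hx
    obtain ⟨hsupp, hs2⟩ := Finset.mem_filter.1 hsf
    have hne : p s ≠ 0 := Finsupp.mem_support_iff.1 hsupp
    obtain ⟨hp0, hq0, hdp, hdq, hw⟩ := mem_PF.1 hmem
    dsimp only at hp0 hq0 hdp hdq hw hs2 ⊢
    obtain ⟨r, rfl⟩ : ∃ r : ℕ →₀ ℕ, p = r + Finsupp.single s 1 := ⟨_, decomp hne⟩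
    rw [add_sub_single]
    rw [deg_add_single] at hdp
    rw [wdeg_add_single] at hw
    have hr0 : r 0 = 0 := by
      rw [Finsupp.add_apply, Finsupp.single_apply, if_neg (by omega : ¬ s = 0)] at hp0
      omega
    refine Finset.mem_sigma.2 ⟨mem_PF.2 ⟨?_, hq0, ?_, hdq, ?_⟩, ?_⟩
    · dsimp only
      rw [Finsupp.add_apply, Finsupp.single_apply, if_neg (by omega : ¬ s - 1 = 0), hr0]
      rfl
    · dsimp only; rw [deg_add_single]; omega
    · dsimp only; rw [wdeg_add_single]; omega
    · simp
  · rintro ⟨⟨p, q⟩, t⟩ hy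
    obtain ⟨hmem, hsupp⟩ := Finset.mem_sigma.1 hy
    have hne : p t ≠ 0 := Finsupp.mem_support_iff.1 hsupp
    obtain ⟨hp0, hq0, hdp, hdq, hw⟩ := mem_PF.1 hmem
    dsimp only at hp0 hq0 hdp hdq hw ⊢
    have ht0 : t ≠ 0 := by rintro rfl; exact hne hp0
    obtain ⟨r, rfl⟩ : ∃ r : ℕ →₀ ℕ, p = r + Finsupp.single t 1 := ⟨_, decomp hne⟩
    rw [add_sub_single]
    rw [deg_add_single] at hdp
    rw [wdeg_add_single] at hw
    have hr0 : r 0 = 0 := by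
      rw [Finsupp.add_apply, Finsupp.single_apply, if_neg ht0] at hp0
      omega
    refine Finset.mem_sigma.2 ⟨mem_PF.2 ⟨?_, hq0, ?_, hdq, ?_⟩, ?_⟩
    · dsimp only
      rw [Finsupp.add_apply, Finsupp.single_apply, if_neg (by omega : ¬ t + 1 = 0), hr0]
      rfl
    · dsimp only; rw [deg_add_single]; omega
    · dsimp only; rw [wdeg_add_single]; omega
    · dsimp only
      refine Finset.mem_filter.2 ⟨?_, by omega⟩
      simp
  · rintro ⟨⟨p, q⟩, s⟩ hx
    obtain ⟨hmem, hsf⟩ := Finset.mem_sigma.1 hx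
    obtain ⟨hsupp, hs2⟩ := Finset.mem_filter.1 hsf
    have hne : p s ≠ 0 := Finsupp.mem_support_iff.1 hsupp
    dsimp only at hs2 ⊢
    obtain ⟨r, rfl⟩ : ∃ r : ℕ →₀ ℕ, p = r + Finsupp.single s 1 := ⟨_, decomp hne⟩
    have hs1 : s - 1 + 1 = s := by omega
    simp only [add_sub_single, hs1]
  · rintro ⟨⟨p, q⟩, t⟩ hy
    obtain ⟨hmem, hsupp⟩ := Finset.mem_sigma.1 hy
    have hne : p t ≠ 0 := Finsupp.mem_support_iff.1 hsupp
    dsimp only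
    obtain ⟨r, rfl⟩ : ∃ r : ℕ →₀ ℕ, p = r + Finsupp.single t 1 := ⟨_, decomp hne⟩
    simp only [add_sub_single, Nat.add_sub_cancel]
  · rintro ⟨⟨p, q⟩, s⟩ hx
    obtain ⟨hmem, hsf⟩ := Finset.mem_sigma.1 hx
    obtain ⟨hsupp, hs2⟩ := Finset.mem_filter.1 hsf
    have hne : p s ≠ 0 := Finsupp.mem_support_iff.1 hsupp
    dsimp only at hs2 ⊢
    obtain ⟨r, rfl⟩ : ∃ r : ℕ →₀ ℕ, p = r + Finsupp.single s 1 := ⟨_, decomp hne⟩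
    rw [add_sub_single]
    have hs1 : s - 1 + 1 = s := by omega
    have hval1 : ((r + Finsupp.single s 1 : ℕ →₀ ℕ)) s = r s + 1 := by simp
    have hval2 : ((r + Finsupp.single (s - 1) 1 : ℕ →₀ ℕ)) (s - 1) = r (s - 1) + 1 := by simp
    have hfs : Nat.factorial s = s * Nat.factorial (s - 1) := by
      rw [← hs1, Nat.factorial_succ, hs1]
    have h1 : (wt r : ℝ) ≠ 0 := Nat.cast_ne_zero.2 (wt_pos r).ne'
    have h2 : (wt q : ℝ) ≠ 0 := Nat.cast_ne_zero.2 (wt_pos q).ne'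
    have h3 : ((Nat.factorial (s - 1) : ℕ) : ℝ) ≠ 0 :=
      Nat.cast_ne_zero.2 (Nat.factorial_pos _).ne'
    have h4 : (s : ℝ) ≠ 0 := Nat.cast_ne_zero.2 (by omega)
    simp only [c, hval1, hval2, wt_add_single, hfs]
    push_cast
    field_simp

lemma A1 (n h k : ℕ) :
    ∑ pq ∈ PF (n+1) h k, (wdeg pq.1 : ℝ) * c n pq
      = (h : ℝ) * P n h k + prev h (fun h' => P n h' k) := by
  classical
  have step : ∀ pq ∈ PF (n+1) h k, (wdeg pq.1 : ℝ) * c n pq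
      = (∑ s ∈ pq.1.support.filter (fun s => 2 ≤ s), (s : ℝ) * (pq.1 s : ℝ) * c n pq)
        + (if pq.1 1 ≠ 0 then (pq.1 1 : ℝ) * c n pq else 0) := by
    intro pq hpq
    obtain ⟨hp0, hq0, hdp, hdq, hw⟩ := mem_PF.1 hpq
    have hw' : (wdeg pq.1 : ℝ) = ∑ s ∈ pq.1.support, (s : ℝ) * (pq.1 s : ℝ) := by
      rw [wdeg_eq_sum]; push_cast; rfl
    rw [hw', Finset.sum_mul,
      ← Finset.sum_filter_add_sum_filter_not pq.1.support (fun s => 2 ≤ s)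
        (fun s => (s : ℝ) * (pq.1 s : ℝ) * c n pq)]
    congr 1
    have hfil : pq.1.support.filter (fun s => ¬ 2 ≤ s)
        = if pq.1 1 ≠ 0 then {1} else ∅ := by
      ext a
      simp only [Finset.mem_filter, Finsupp.mem_support_iff]
      split
      · next hcond =>
        simp only [Finset.mem_singleton]
        constructor
        · rintro ⟨ha, hb⟩
          by_contra hne1
          rcases Nat.lt_or_ge a 2 with h2 | h2
          · interval_cases a
            · exact ha hp0
            · exact hne1 rfl
          · omega
        · rintro rfl; exact ⟨hcond, by omega⟩
      · next hcond =>
        push_neg at hcond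
        simp only [Finset.notMem_empty, iff_false, not_and]
        intro ha hb
        rcases Nat.lt_or_ge a 2 with h2 | h2
        · interval_cases a
          · exact ha hp0
          · exact ha hcond
        · omega
    rw [hfil]
    split
    · next => rw [Finset.sum_singleton]; push_cast; ring
    · next => simp
  rw [Finset.sum_congr rfl step, Finset.sum_add_distrib, A1b, ← Finset.sum_filter, A1a]

lemma P_comm (n h k : ℕ) : P n h k = P n k h := by
  rw [P_def, P_def, sum_PF_swap n h k (c n)]
  refine Finset.sum_congr rfl fun pq _ => ?_
  simp only [c, Prod.swap]
  ring

lemma P_succ (n h k : ℕ) :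
    P (n+1) h k = ((h : ℝ) + k) * P n h k
      + prev h (fun h' => P n h' k) + prev k (fun k' => P n h k') := by
  classical
  have expand : ∀ pq ∈ PF (n+1) h k, c (n+1) pq
      = (wdeg pq.1 : ℝ) * c n pq + (wdeg pq.2 : ℝ) * c n pq := by
    intro pq hpq
    obtain ⟨hp0, hq0, hdp, hdq, hw⟩ := mem_PF.1 hpq
    have hcast : (wdeg pq.1 : ℝ) + (wdeg pq.2 : ℝ) = (n : ℝ) + 1 := by
      exact_mod_cast congrArg (Nat.cast : ℕ → ℝ) hw
    simp only [c, Nat.factorial_succ]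
    push_cast
    rw [← add_mul, hcast]
    ring
  rw [P_def, Finset.sum_congr rfl expand, Finset.sum_add_distrib, A1]
  have hsw : ∑ pq ∈ PF (n+1) h k, (wdeg pq.2 : ℝ) * c n pq
      = ∑ pq ∈ PF (n+1) k h, (wdeg pq.1 : ℝ) * c n pq := by
    rw [sum_PF_swap (n+1) h k (fun pq => (wdeg pq.2 : ℝ) * c n pq)]
    refine Finset.sum_congr rfl fun pq _ => ?_
    simp only [c, Prod.swap]
    ring
  rw [hsw, A1]
  have hpr : prev k (fun k' => P n k' h) = prev k (fun k' => P n h k') := by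
    cases k with
    | zero => rfl
    | succ k' => simp only [prev]; exact P_comm n k' h
  rw [hpr, P_comm n k h]
  ring

lemma P_eq (n h k : ℕ) :
    P n h k = (Nat.choose (h + k) h : ℝ) * (stirling n (h + k) : ℝ) := by
  induction n generalizing h k with
  | zero =>
    rw [P_zero]
    split
    · next hc =>
      obtain ⟨rfl, rfl⟩ := hc
      norm_num [stirling]
    · next hc =>
      rcases Nat.eq_zero_or_pos (h + k) with hz | hpos
      · exact absurd ⟨by omega, by omega⟩ hc
      · obtain ⟨j, hj⟩ : ∃ j, h + k = j + 1 := ⟨h + k - 1, by omega⟩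
        rw [hj]
        simp [stirling]
  | succ n ih =>
    rw [P_succ]
    cases h with
    | zero =>
      cases k with
      | zero =>
        simp only [prev, ih]
        norm_num [stirling]
      | succ j =>
        simp only [prev, ih]
        simp only [Nat.zero_add]
        have hst : stirling (n+1) (j+1) = (j+1) * stirling n (j+1) + stirling n j := rfl
        rw [hst]
        simp only [Nat.choose_zero_right]
        push_cast
        ring
    | succ i =>
      cases k with
      | zero =>
        simp only [prev, ih]
        simp only [Nat.add_zero]
        have hst : stirling (n+1) (i+1) = (i+1) * stirling n (i+1) + stirling n i := rfl
        rw [hst]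
        simp only [Nat.choose_self]
        push_cast
        ring
      | succ j =>
        simp only [prev, ih]
        have e1 : i + (j+1) = i + j + 1 := by omega
        have e2 : (i+1) + j = i + j + 1 := by omega
        have e3 : (i+1) + (j+1) = (i + j + 1) + 1 := by omega
        rw [e1, e2, e3]
        have hst : stirling (n+1) ((i+j+1) + 1)
            = ((i+j+1) + 1) * stirling n ((i+j+1) + 1) + stirling n (i+j+1) := rfl
        rw [hst]
        have hch : ((i+j+1) + 1).choose (i+1) = (i+j+1).choose i + (i+j+1).choose (i+1) :=
          Nat.choose_succ_succ _ _
        rw [hch]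
        push_cast
        ring

end Stmt4Aux

open Stmt4Aux in
theorem stmt4 (m h k ℓ : ℕ) (hm : 1 ≤ m) (hhk1 : 1 ≤ h + k) (hhkm : h + k ≤ m)
    (hl : ℓ ≤ m - h - k) :
    (∑ᶠ pq ∈ {pq : (ℕ →₀ ℕ) × (ℕ →₀ ℕ) |
        pq.1 0 = 0 ∧ pq.2 0 = 0 ∧
        pq.1.sum (fun _ n => n) = h ∧ pq.2.sum (fun _ n => n) = k ∧
        pq.1.sum (fun s n => s * n) + pq.2.sum (fun s n => s * n) = m - ℓ},
      (Nat.factorial m : ℝ) /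
        ((Nat.factorial ℓ : ℝ) *
          ((pq.1.prod fun s n => Nat.factorial s ^ n * Nat.factorial n : ℕ) : ℝ) *
          ((pq.2.prod fun s n => Nat.factorial s ^ n * Nat.factorial n : ℕ) : ℝ)))
    = (Nat.choose (h + k) h : ℝ) * (Nat.choose m ℓ : ℝ) * (stirling (m - ℓ) (h + k) : ℝ) := by
  classical
  have hset : {pq : (ℕ →₀ ℕ) × (ℕ →₀ ℕ) |
        pq.1 0 = 0 ∧ pq.2 0 = 0 ∧
        pq.1.sum (fun _ n => n) = h ∧ pq.2.sum (fun _ n => n) = k ∧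
        pq.1.sum (fun s n => s * n) + pq.2.sum (fun s n => s * n) = m - ℓ}
      = ↑(PF (m - ℓ) h k) := by
    ext pq
    rw [Set.mem_setOf_eq, Finset.mem_coe, mem_PF]
    rfl
  rw [hset, finsum_mem_coe_finset]
  have hlm : ℓ ≤ m := le_trans hl (le_trans (Nat.sub_le _ _) (Nat.sub_le _ _))
  have key : Nat.choose m ℓ * Nat.factorial ℓ * Nat.factorial (m - ℓ) = Nat.factorial m :=
    Nat.choose_mul_factorial_mul_factorial hlm
  have hterm : ∀ pq ∈ PF (m - ℓ) h k,
      (Nat.factorial m : ℝ) /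
        ((Nat.factorial ℓ : ℝ) *
          ((pq.1.prod fun s n => Nat.factorial s ^ n * Nat.factorial n : ℕ) : ℝ) *
          ((pq.2.prod fun s n => Nat.factorial s ^ n * Nat.factorial n : ℕ) : ℝ))
      = (Nat.choose m ℓ : ℝ) * c (m - ℓ) pq := by
    intro pq _
    have h1 : (wt pq.1 : ℝ) ≠ 0 := Nat.cast_ne_zero.2 (wt_pos pq.1).ne'
    have h2 : (wt pq.2 : ℝ) ≠ 0 := Nat.cast_ne_zero.2 (wt_pos pq.2).ne'
    have h3 : ((Nat.factorial ℓ : ℕ) : ℝ) ≠ 0 := Nat.cast_ne_zero.2 (Nat.factorial_pos _).ne'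
    rw [c, ← key]
    show ((Nat.choose m ℓ * Nat.factorial ℓ * Nat.factorial (m - ℓ) : ℕ) : ℝ) /
        ((Nat.factorial ℓ : ℝ) * (wt pq.1 : ℝ) * (wt pq.2 : ℝ)) = _
    push_cast
    field_simp
  rw [Finset.sum_congr rfl hterm, ← Finset.mul_sum, ← P_def, P_eq]
  ring
end

section
/- Let T, U be C¹ tensor fields on ℝ^d of orders ℓ and m with values in ⊗^ℓ ℂ^d and ⊗^m ℂ^d. Define the symmetrized derivative ∇_𝒮 T := 𝒮(∇T), where (∇T)_{λ₁...λ_{ℓ+1}} := ∂_{λ_{ℓ+1}} T_{λ₁...λ_ℓ} and 𝒮 is symmetrization. Then the symmetrized Leibnitz rule holds: ∇_𝒮(T ∨ U) = (∇_𝒮 T) ∨ U + T ∨ (∇_𝒮 U). -/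
/-- A complex tensor of order `n` on `ℂ^d`. -/
abbrev Tensor (d n : ℕ) := (Fin n → Fin d) → ℂ

/-- The tensor product, concatenating index tuples. -/
def tensProd {d ℓ m : ℕ} (T : Tensor d ℓ) (U : Tensor d m) : Tensor d (ℓ + m) :=
  fun lam => T (fun i => lam (Fin.castAdd m i)) * U (fun i => lam (Fin.natAdd ℓ i))

/-- Symmetrization of a tensor. -/
noncomputable def symmT {d n : ℕ} (T : Tensor d n) : Tensor d n :=
  fun lam => (1 / (Nat.factorial n : ℂ)) * ∑ σ : Equiv.Perm (Fin n), T (lam ∘ σ)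

/-- Symmetrized tensor product. -/
noncomputable def vee {d ℓ m : ℕ} (T : Tensor d ℓ) (U : Tensor d m) : Tensor d (ℓ + m) :=
  symmT (tensProd T U)

/-- Reindexing a tensor along an equality of orders. -/
def tcast {d n n' : ℕ} (h : n = n') (T : Tensor d n) : Tensor d n' :=
  fun lam => T (fun i => lam (Fin.cast h i))

/-- The derivative of a tensor field on `ℝ^d`: the differentiation index is appended
as the last index, `(∇T)_{λ₁...λ_{ℓ+1}} = ∂_{λ_{ℓ+1}} T_{λ₁...λ_ℓ}`. -/
noncomputable def tgrad {d ℓ : ℕ} (T : EuclideanSpace ℝ (Fin d) → Tensor d ℓ) :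
    EuclideanSpace ℝ (Fin d) → Tensor d (ℓ + 1) :=
  fun x lam =>
    fderiv ℝ (fun y => T y (fun i => lam (Fin.castSucc i))) x
      (EuclideanSpace.single (lam (Fin.last ℓ)) 1)

/-- The symmetrized derivative `∇_𝒮 T = 𝒮(∇ T)` of a tensor field. -/
noncomputable def tgradS {d ℓ : ℕ} (T : EuclideanSpace ℝ (Fin d) → Tensor d ℓ) :
    EuclideanSpace ℝ (Fin d) → Tensor d (ℓ + 1) :=
  fun x => symmT (tgrad T x)

/-! ### Auxiliary lemmas -/

lemma symmT_reindex {d n n' : ℕ} (h : n = n') (e : Fin n → Fin n')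
    (he : Function.Bijective e) (V : Tensor d n) :
    symmT (d := d) (fun lam => V (fun i => lam (e i))) = tcast h (symmT V) := by
  subst h
  funext lam
  simp only [symmT, tcast, Fin.cast_refl, Function.comp_def, id]
  congr 1
  refine Fintype.sum_equiv (Equiv.mulRight (Equiv.ofBijective e he))
    (fun τ : Equiv.Perm (Fin n) => V (fun i => lam (τ (e i))))
    (fun ρ : Equiv.Perm (Fin n) => V (fun i => lam (ρ i))) (fun τ => ?_)
  rfl

lemma tcast_rfl {d n : ℕ} (V : Tensor d n) : tcast rfl V = V := rfl

lemma symmT_add {d n : ℕ} (A B : Tensor d n) : symmT (A + B) = symmT A + symmT B := by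
  funext lam
  simp [symmT, Finset.sum_add_distrib, mul_add]

lemma symmT_const_mul {d n : ℕ} (c : ℂ) (V : Tensor d n) :
    symmT (fun lam => c * V lam) = fun lam => c * symmT V lam := by
  funext lam
  simp only [symmT]
  rw [← Finset.mul_sum]
  ring

lemma symmT_sum {d n : ℕ} {ι : Type*} (s : Finset ι) (f : ι → Tensor d n) :
    symmT (fun lam => ∑ i ∈ s, f i lam) = fun lam => ∑ i ∈ s, symmT (f i) lam := by
  funext lam
  simp only [symmT]
  rw [Finset.sum_comm, Finset.mul_sum]

/-- Extension of a permutation of `Fin ℓ` to `Fin (ℓ+m)`, identity on the second block. -/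
def extPermL {ℓ m : ℕ} (σ : Equiv.Perm (Fin ℓ)) : Equiv.Perm (Fin (ℓ + m)) :=
  finSumFinEquiv.symm.trans ((Equiv.sumCongr σ (Equiv.refl (Fin m))).trans finSumFinEquiv)

@[simp] lemma extPermL_castAdd {ℓ m : ℕ} (σ : Equiv.Perm (Fin ℓ)) (i : Fin ℓ) :
    extPermL (m := m) σ (Fin.castAdd m i) = Fin.castAdd m (σ i) := by
  simp [extPermL]

@[simp] lemma extPermL_natAdd {ℓ m : ℕ} (σ : Equiv.Perm (Fin ℓ)) (i : Fin m) :
    extPermL (m := m) σ (Fin.natAdd ℓ i) = Fin.natAdd ℓ i := by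
  simp [extPermL]

/-- Extension of a permutation of `Fin m` to `Fin (ℓ+m)`, identity on the first block. -/
def extPermR {ℓ m : ℕ} (σ : Equiv.Perm (Fin m)) : Equiv.Perm (Fin (ℓ + m)) :=
  finSumFinEquiv.symm.trans ((Equiv.sumCongr (Equiv.refl (Fin ℓ)) σ).trans finSumFinEquiv)

@[simp] lemma extPermR_castAdd {ℓ m : ℕ} (σ : Equiv.Perm (Fin m)) (i : Fin ℓ) :
    extPermR (ℓ := ℓ) σ (Fin.castAdd m i) = Fin.castAdd m i := by
  simp [extPermR]

@[simp] lemma extPermR_natAdd {ℓ m : ℕ} (σ : Equiv.Perm (Fin m)) (i : Fin m) :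
    extPermR (ℓ := ℓ) σ (Fin.natAdd ℓ i) = Fin.natAdd ℓ (σ i) := by
  simp [extPermR]

/-- Extension of a permutation of `Fin n` to `Fin (n+1)` fixing the last element. -/
def extL {n : ℕ} (σ : Equiv.Perm (Fin n)) : Equiv.Perm (Fin (n + 1)) :=
  finSuccEquivLast.trans ((σ.optionCongr).trans finSuccEquivLast.symm)

@[simp] lemma extL_castSucc {n : ℕ} (σ : Equiv.Perm (Fin n)) (i : Fin n) :
    extL σ (Fin.castSucc i) = Fin.castSucc (σ i) := by
  simp [extL]

@[simp] lemma extL_last {n : ℕ} (σ : Equiv.Perm (Fin n)) :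
    extL σ (Fin.last n) = Fin.last n := by
  simp [extL]

lemma factorial_ne_zero' (n : ℕ) : ((Nat.factorial n : ℂ)) ≠ 0 := by
  exact_mod_cast Nat.cast_ne_zero.mpr (Nat.factorial_ne_zero n)

lemma sum_perm_const_symmT {d n k : ℕ} (W : Tensor d n)
    (g : Equiv.Perm (Fin k) → Tensor d n)
    (hg : ∀ σ, g σ = symmT W) :
    (fun lam => (1 / (Nat.factorial k : ℂ)) * ∑ σ : Equiv.Perm (Fin k), g σ lam)
      = symmT W := by
  funext lam
  rw [Finset.sum_congr rfl fun σ _ => by rw [hg σ]]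
  rw [Finset.sum_const, Finset.card_univ, Fintype.card_perm, Fintype.card_fin,
    nsmul_eq_mul]
  field_simp
  exact mul_div_cancel_left₀ _ (factorial_ne_zero' k)

/-- Left absorption: symmetrizing the left factor is absorbed by outer symmetrization. -/
lemma symmT_tensProd_symmT_left {d ℓ m : ℕ} (A : Tensor d ℓ) (B : Tensor d m) :
    symmT (tensProd (symmT A) B) = symmT (tensProd A B) := by
  have h1 : tensProd (symmT A) B = fun lam => (1 / (Nat.factorial ℓ : ℂ)) *
      ∑ σ : Equiv.Perm (Fin ℓ), tensProd A B (fun i => lam (extPermL σ i)) := by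
    funext lam
    simp only [tensProd, symmT, Function.comp_def, extPermL_castAdd, extPermL_natAdd]
    rw [mul_assoc, Finset.sum_mul]
  rw [h1, symmT_const_mul, symmT_sum]
  exact sum_perm_const_symmT _ _ fun σ => by
    simpa [tcast_rfl] using symmT_reindex rfl (fun i => extPermL σ i) (extPermL σ).bijective
      (tensProd A B)

/-- Right absorption. -/
lemma symmT_tensProd_symmT_right {d ℓ m : ℕ} (A : Tensor d ℓ) (B : Tensor d m) :
    symmT (tensProd A (symmT B)) = symmT (tensProd A B) := by
  have h1 : tensProd A (symmT B) = fun lam => (1 / (Nat.factorial m : ℂ)) *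
      ∑ σ : Equiv.Perm (Fin m), tensProd A B (fun i => lam (extPermR σ i)) := by
    funext lam
    simp only [tensProd, symmT, Function.comp_def, extPermR_castAdd, extPermR_natAdd]
    rw [mul_left_comm, Finset.mul_sum]
  rw [h1, symmT_const_mul, symmT_sum]
  exact sum_perm_const_symmT _ _ fun σ => by
    simpa [tcast_rfl] using symmT_reindex rfl (fun i => extPermR σ i) (extPermR σ).bijective
      (tensProd A B)

/-- The gradient of a symmetrized field, as an average of reindexed gradients. -/
lemma tgrad_symmT {d n : ℕ} (W : EuclideanSpace ℝ (Fin d) → Tensor d n)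
    (x : EuclideanSpace ℝ (Fin d))
    (hW : ∀ lam, DifferentiableAt ℝ (fun y => W y lam) x) :
    tgrad (fun y => symmT (W y)) x = fun lam => (1 / (Nat.factorial n : ℂ)) *
      ∑ σ : Equiv.Perm (Fin n), tgrad W x (fun i => lam (extL σ i)) := by
  funext lam
  simp only [tgrad, symmT, Function.comp_def]
  rw [fderiv_const_mul (DifferentiableAt.fun_sum fun σ _ => hW _)]
  rw [fderiv_fun_sum (fun σ _ => hW _)]
  simp only [ContinuousLinearMap.smul_apply, ContinuousLinearMap.sum_apply, smul_eq_mul]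
  congr 1
  refine Finset.sum_congr rfl fun σ _ => ?_
  simp only [extL_castSucc, extL_last]

/-- Outer symmetrization absorbs inner symmetrization through the gradient. -/
lemma symmT_tgrad_symmT {d n : ℕ} (W : EuclideanSpace ℝ (Fin d) → Tensor d n)
    (x : EuclideanSpace ℝ (Fin d))
    (hW : ∀ lam, DifferentiableAt ℝ (fun y => W y lam) x) :
    symmT (tgrad (fun y => symmT (W y)) x) = symmT (tgrad W x) := by
  rw [tgrad_symmT W x hW, symmT_const_mul, symmT_sum]
  exact sum_perm_const_symmT _ _ fun σ => by
    simpa [tcast_rfl] using symmT_reindex rfl (fun i => extL σ i) (extL σ).bijective (tgrad W x)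

/-- The reindexing map `Fin (ℓ+1+m) → Fin (ℓ+m+1)` moving position `ℓ` to the end. -/
def eL (ℓ m : ℕ) : Fin (ℓ + 1 + m) → Fin (ℓ + m + 1) := fun j =>
  if h : (j : ℕ) < ℓ then ⟨j, by omega⟩
  else if h2 : (j : ℕ) = ℓ then ⟨ℓ + m, by omega⟩
  else ⟨(j : ℕ) - 1, by omega⟩

lemma eL_bijective (ℓ m : ℕ) : Function.Bijective (eL ℓ m) := by
  rw [Fintype.bijective_iff_injective_and_card]
  constructor
  · intro a b hab
    simp only [eL] at hab
    split_ifs at hab <;> simp only [Fin.mk.injEq] at hab <;> exact Fin.ext (by omega)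
  · simp only [Fintype.card_fin]; omega

lemma eL_castAdd_castSucc {ℓ m : ℕ} (i : Fin ℓ) :
    eL ℓ m (Fin.castAdd m (Fin.castSucc i)) = Fin.castSucc (Fin.castAdd m i) := by
  have : ((Fin.castAdd m (Fin.castSucc i) : Fin (ℓ + 1 + m)) : ℕ) = (i : ℕ) := rfl
  refine Fin.ext ?_
  simp [eL, this, i.isLt]

lemma eL_castAdd_last {ℓ m : ℕ} :
    eL ℓ m (Fin.castAdd m (Fin.last ℓ)) = Fin.last (ℓ + m) := by
  refine Fin.ext ?_
  simp [eL]

lemma eL_natAdd {ℓ m : ℕ} (i : Fin m) :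
    eL ℓ m (Fin.natAdd (ℓ + 1) i) = Fin.castSucc (Fin.natAdd ℓ i) := by
  have h1 : ((Fin.natAdd (ℓ + 1) i : Fin (ℓ + 1 + m)) : ℕ) = ℓ + 1 + (i : ℕ) := rfl
  refine Fin.ext ?_
  simp only [eL, h1]
  rw [dif_neg (by omega), dif_neg (by omega)]
  simp only [Fin.coe_castSucc, Fin.coe_natAdd]
  omega

/-- Pointwise Leibnitz rule for the (unsymmetrized) gradient of a tensor product. -/
lemma tgrad_tensProd {d ℓ m : ℕ} (T : EuclideanSpace ℝ (Fin d) → Tensor d ℓ)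
    (U : EuclideanSpace ℝ (Fin d) → Tensor d m) (x : EuclideanSpace ℝ (Fin d))
    (hT : ∀ lam, DifferentiableAt ℝ (fun y => T y lam) x)
    (hU : ∀ lam, DifferentiableAt ℝ (fun y => U y lam) x) :
    tgrad (fun y => tensProd (T y) (U y)) x =
      (fun lam => tensProd (tgrad T x) (U x) (fun i => lam (eL ℓ m i))) +
        (fun lam => tensProd (T x) (tgrad U x) lam) := by
  funext lam
  simp only [Pi.add_apply]
  show (fderiv ℝ (fun y => T y _ * U y _) x) _ = _
  rw [fderiv_fun_mul (hT _) (hU _)]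
  simp only [ContinuousLinearMap.add_apply, ContinuousLinearMap.smul_apply, smul_eq_mul]
  rw [add_comm]
  congr 1
  · -- gradient-of-T term
    simp only [tensProd, tgrad]
    have h1 : (fun i : Fin ℓ => lam (eL ℓ m (Fin.castAdd m i.castSucc)))
        = fun i => lam ((Fin.castAdd m i).castSucc) :=
      funext fun i => by rw [eL_castAdd_castSucc]
    have h2 : lam (eL ℓ m (Fin.castAdd m (Fin.last ℓ))) = lam (Fin.last (ℓ + m)) := by
      rw [eL_castAdd_last]
    have h3 : (fun i : Fin m => lam (eL ℓ m (Fin.natAdd (ℓ + 1) i)))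
        = fun i => lam ((Fin.natAdd ℓ i).castSucc) :=
      funext fun i => by rw [eL_natAdd]
    rw [h1, h2, h3, mul_comm]

theorem stmt10 (d ℓ m : ℕ) (T : EuclideanSpace ℝ (Fin d) → Tensor d ℓ)
    (U : EuclideanSpace ℝ (Fin d) → Tensor d m)
    (hT : ∀ lam, ContDiff ℝ 1 fun x => T x lam)
    (hU : ∀ lam, ContDiff ℝ 1 fun x => U x lam) :
    tgradS (fun y => vee (T y) (U y)) =
      fun x =>
        tcast (Nat.add_right_comm ℓ 1 m) (vee (tgradS T x) (U x)) +
          tcast (show ℓ + (m + 1) = ℓ + m + 1 from rfl) (vee (T x) (tgradS U x)) := by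
  funext x
  have hTd : ∀ lam, DifferentiableAt ℝ (fun y => T y lam) x := fun lam =>
    ((hT lam).differentiable one_ne_zero).differentiableAt
  have hUd : ∀ lam, DifferentiableAt ℝ (fun y => U y lam) x := fun lam =>
    ((hU lam).differentiable one_ne_zero).differentiableAt
  have hWd : ∀ lam : Fin (ℓ + m) → Fin d,
      DifferentiableAt ℝ (fun y => tensProd (T y) (U y) lam) x := fun lam =>
    (hTd _).mul (hUd _)
  show symmT (tgrad (fun y => symmT (tensProd (T y) (U y))) x) = _
  rw [symmT_tgrad_symmT _ x hWd]
  rw [tgrad_tensProd T U x hTd hUd, symmT_add]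
  congr 1
  · -- first summand
    exact (symmT_reindex (Nat.add_right_comm ℓ 1 m) (eL ℓ m) (eL_bijective ℓ m)
        (tensProd (tgrad T x) (U x))).trans
      (congrArg (tcast (Nat.add_right_comm ℓ 1 m))
        (symmT_tensProd_symmT_left (tgrad T x) (U x)).symm)
  · -- second summand
    exact (symmT_tensProd_symmT_right (T x) (tgrad U x)).symm
end
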